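/- Suppose in addition that 0 < ρ ≤ 2R, ε ≤ ρ², (1 + κ⁻¹)·ρ² ≤ 1/2, and that 1/M ≤ Δδ(y') ≤ M for all y' ∈ B'_ρ(0'), for some M ≥ 1, where Δδ = Σ_{i=1}^{n−1} ∂²_{y_i}δ. Let c ≥ 0 be a constant and let u₂ ∈ C²(B'_ρ(0')) ∩ C⁰(closure) satisfy Σ_{i=1}^{n−1} ∂_{y_i}( δ(y')·∂_{y_i} u₂(y') ) = c in B'_ρ(0') with u₂ = 0 on ∂B'_ρ(0'). Then there exists a constant C depending only on n, κ, M such that for all y' ∈ B'_ρ(0'): M·c·ln δ(y') − C·c·|ln ρ| ≤ u₂(y') ≤ (1/M)·c·ln δ(y') + C·c·|ln ρ|. -/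

import Mathlib

noncomputable section
open MeasureTheory Real
open scoped BigOperators

/-- ℝ^{n-1}, realized as a `d`-dimensional Euclidean space (d = n − 1). -/
abbrev Rsp (d : ℕ) := EuclideanSpace ℝ (Fin d)

/-- η(z') = ε + |z'|². -/
def eta {d : ℕ} (ε : ℝ) (z' : Rsp d) : ℝ := ε + ‖z'‖ ^ 2

/-- δ(z') = ε + f(z') − g(z'). -/
def dlt {d : ℕ} (ε : ℝ) (f g : Rsp d → ℝ) (z' : Rsp d) : ℝ := ε + f z' - g z'

/-- The narrow region Ω_r(z) = {(x', x_n) : |x' − z'| < r, g(x') < x_n < ε + f(x')}. -/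
def Om {d : ℕ} (ε : ℝ) (f g : Rsp d → ℝ) (r : ℝ) (z : Rsp d × ℝ) : Set (Rsp d × ℝ) :=
  {x | ‖x.1 - z.1‖ < r ∧ g x.1 < x.2 ∧ x.2 < ε + f x.1}

/-- The cylinder Q_{δ,s}(z) = {(y', y_n) : |y' − z'| < s, |y_n| < δ(z')}. -/
def Qc {d : ℕ} (ε : ℝ) (f g : Rsp d → ℝ) (s : ℝ) (z : Rsp d × ℝ) : Set (Rsp d × ℝ) :=
  {y | ‖y.1 - z.1‖ < s ∧ |y.2| < dlt ε f g z.1}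

/-- The geometric hypotheses on the two graphs f and g: both C², vanishing to first
order at the origin, f ≥ g, relative strict convexity (κ-pinching) of f − g, and C²
norms bounded by K on the ball of radius 2R. -/
def GoodFG {d : ℕ} (R κ K : ℝ) (f g : Rsp d → ℝ) : Prop :=
  ContDiff ℝ 2 f ∧ ContDiff ℝ 2 g ∧ f 0 = 0 ∧ g 0 = 0 ∧
  fderiv ℝ f 0 = 0 ∧ fderiv ℝ g 0 = 0 ∧
  (∀ x' : Rsp d, ‖x'‖ ≤ 2 * R → g x' ≤ f x') ∧
  (∀ x' : Rsp d, ‖x'‖ ≤ 2 * R → κ * ‖x'‖ ^ 2 ≤ f x' - g x' ∧ f x' - g x' ≤ κ⁻¹ * ‖x'‖ ^ 2) ∧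
  (∀ x' : Rsp d, ‖x'‖ ≤ 2 * R →
    |f x'| ≤ K ∧ ‖fderiv ℝ f x'‖ ≤ K ∧ ‖fderiv ℝ (fderiv ℝ f) x'‖ ≤ K) ∧
  (∀ x' : Rsp d, ‖x'‖ ≤ 2 * R →
    |g x'| ≤ K ∧ ‖fderiv ℝ g x'‖ ≤ K ∧ ‖fderiv ℝ (fderiv ℝ g) x'‖ ≤ K)

/-- Second directional derivative of u at x in direction v. -/
def dd2 {d : ℕ} (u : Rsp d × ℝ → ℝ) (v : Rsp d × ℝ) (x : Rsp d × ℝ) : ℝ :=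
  fderiv ℝ (fun y => fderiv ℝ u y v) x v

/-- The Laplacian of u on ℝ^{n-1} × ℝ (sum of pure second derivatives in the
coordinate directions). -/
def lapl {d : ℕ} (u : Rsp d × ℝ → ℝ) (x : Rsp d × ℝ) : ℝ :=
  (∑ i : Fin d, dd2 u (EuclideanSpace.single i (1 : ℝ), (0 : ℝ)) x)
    + dd2 u ((0 : Rsp d), (1 : ℝ)) x

/-- u is harmonic in Ω_{2R}, has zero (co)normal derivative on the upper graph
Γ⁺ = {x_n = ε + f(x')}, and outward normal derivative φ·(normalization) on the lower
graph Γ⁻ = {x_n = g(x')}: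
∂_{x_n}u = ∇f·∇_{x'}u on Γ⁺, and ∇g·∇_{x'}u − ∂_{x_n}u = φ·√(1+|∇g|²) on Γ⁻. -/
def IsSolNeu {d : ℕ} (ε R : ℝ) (f g : Rsp d → ℝ) (φ : Rsp d → ℝ)
    (u : Rsp d × ℝ → ℝ) : Prop :=
  (∀ x ∈ Om ε f g (2 * R) (0 : Rsp d × ℝ), lapl u x = 0) ∧
  (∀ x' : Rsp d, ‖x'‖ < 2 * R →
    fderiv ℝ u (x', ε + f x') ((0 : Rsp d), (1 : ℝ))
      = fderiv ℝ u (x', ε + f x') (gradient f x', (0 : ℝ))) ∧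
  (∀ x' : Rsp d, ‖x'‖ < 2 * R →
    fderiv ℝ u (x', g x') (gradient g x', (0 : ℝ))
        - fderiv ℝ u (x', g x') ((0 : Rsp d), (1 : ℝ))
      = φ x' * Real.sqrt (1 + ‖gradient g x'‖ ^ 2))

/-- u ∈ C²(Ω_{2R}) ∩ C¹(closure Ω_{2R}). -/
def RegC2C1 {d : ℕ} (ε R : ℝ) (f g : Rsp d → ℝ) (u : Rsp d × ℝ → ℝ) : Prop :=
  ContDiffOn ℝ 2 u (Om ε f g (2 * R) (0 : Rsp d × ℝ)) ∧
  (∀ x ∈ closure (Om ε f g (2 * R) (0 : Rsp d × ℝ)), DifferentiableAt ℝ u x) ∧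
  ContinuousOn (fderiv ℝ u) (closure (Om ε f g (2 * R) (0 : Rsp d × ℝ)))

/-- φ ∈ C^α(B'_{2R}(0')). -/
def HolderPhi {d : ℕ} (α R : ℝ) (φ : Rsp d → ℝ) : Prop :=
  ∃ L : ℝ, ∀ x' y' : Rsp d, ‖x'‖ ≤ 2 * R → ‖y'‖ ≤ 2 * R →
    |φ x' - φ y'| ≤ L * ‖x' - y'‖ ^ α

/-- The sup norm of h over E. -/
def supN {X Y : Type*} [NormedAddCommGroup X] [NormedAddCommGroup Y]
    (E : Set X) (h : X → Y) : ℝ :=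
  sSup ((fun x => ‖h x‖) '' E)

/-- The Hölder seminorm [h]_{C^μ(E)}. -/
def hSemi {X Y : Type*} [NormedAddCommGroup X] [NormedAddCommGroup Y]
    (μ : ℝ) (E : Set X) (h : X → Y) : ℝ :=
  sSup ((fun p : X × X => ‖h p.1 - h p.2‖ / ‖p.1 - p.2‖ ^ μ) ''
    {p : X × X | p.1 ∈ E ∧ p.2 ∈ E ∧ p.1 ≠ p.2})

/-- The oscillation of h over E. -/
def oscS {X : Type*} (E : Set X) (h : X → ℝ) : ℝ := sSup (h '' E) - sInf (h '' E)

/-- The weighted norm ‖∇u‖*_{C^μ(E)} := sup_E |∇u| + η(z')^μ·[∇u]_{C^μ(E)}. -/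
def gradStar {d : ℕ} (ε μ : ℝ) (z' : Rsp d) (E : Set (Rsp d × ℝ)) (u : Rsp d × ℝ → ℝ) : ℝ :=
  supN E (fun x => fderiv ℝ u x) + (eta ε z') ^ μ * hSemi μ E (fun x => fderiv ℝ u x)

/-- The weighted boundary norm ‖φ‖*_{C^α(Γ_s⁻(z))} := sup_{B'_s(z')}|φ| + η(z')^α·[φ]_{C^α(B'_s(z'))}. -/
def phiStar {d : ℕ} (ε α : ℝ) (z' : Rsp d) (s : ℝ) (φ : Rsp d → ℝ) : ℝ :=
  supN (Metric.ball z' s) φ + (eta ε z') ^ α * hSemi α (Metric.ball z' s) φ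

/-- The change of variables Φ_z(x) = (x', 2δ(z')·((x_n − g(x'))/δ(x') − 1/2)). -/
def Phi {d : ℕ} (ε : ℝ) (f g : Rsp d → ℝ) (z' : Rsp d) (x : Rsp d × ℝ) : Rsp d × ℝ :=
  (x.1, 2 * dlt ε f g z' * ((x.2 - g x.1) / dlt ε f g x.1 - 1 / 2))

/-- The inverse change of variables Φ_z⁻¹(y) = (y', g(y') + δ(y')·(y_n/(2δ(z')) + 1/2)). -/
def Psi {d : ℕ} (ε : ℝ) (f g : Rsp d → ℝ) (z' : Rsp d) (y : Rsp d × ℝ) : Rsp d × ℝ :=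
  (y.1, g y.1 + dlt ε f g y.1 * (y.2 / (2 * dlt ε f g z') + 1 / 2))

/-- e^i(y) := ∂_{y_i}g(y')·(y_n − δ(z'))/δ(y') − ∂_{y_i}f(y')·(y_n + δ(z'))/δ(y'). -/
def ee {d : ℕ} (ε : ℝ) (f g : Rsp d → ℝ) (z' : Rsp d) (i : Fin d) (y : Rsp d × ℝ) : ℝ :=
  fderiv ℝ g y.1 (EuclideanSpace.single i (1 : ℝ)) * (y.2 - dlt ε f g z') / dlt ε f g y.1
    - fderiv ℝ f y.1 (EuclideanSpace.single i (1 : ℝ)) * (y.2 + dlt ε f g z') / dlt ε f g y.1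

/-- a^{ii}(y) = δ(y')/(2δ(z')) for 1 ≤ i ≤ n−1. -/
def aii {d : ℕ} (ε : ℝ) (f g : Rsp d → ℝ) (z' : Rsp d) (y : Rsp d × ℝ) : ℝ :=
  dlt ε f g y.1 / (2 * dlt ε f g z')

/-- a^{nj}(y) = (δ(y')/(2δ(z')))·e^j(y) for 1 ≤ j ≤ n−1. -/
def anj {d : ℕ} (ε : ℝ) (f g : Rsp d → ℝ) (z' : Rsp d) (j : Fin d) (y : Rsp d × ℝ) : ℝ :=
  dlt ε f g y.1 / (2 * dlt ε f g z') * ee ε f g z' j y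

/-- a^{nn}(y) = (δ(y')/(2δ(z')))·(Σ_i e^i(y)² + (2δ(z')/δ(y'))²). -/
def ann {d : ℕ} (ε : ℝ) (f g : Rsp d → ℝ) (z' : Rsp d) (y : Rsp d × ℝ) : ℝ :=
  dlt ε f g y.1 / (2 * dlt ε f g z') *
    ((∑ i : Fin d, ee ε f g z' i y ^ 2) + (2 * dlt ε f g z' / dlt ε f g y.1) ^ 2)

/-- Second directional derivative for functions on ℝ^{n−1}. -/
def dd2v {d : ℕ} (h : Rsp d → ℝ) (v : Rsp d) (x : Rsp d) : ℝ :=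
  fderiv ℝ (fun y => fderiv ℝ h y v) x v


open Filter Metric in
private lemma key1d {ψ : ℝ → ℝ} (hψ : ContDiffAt ℝ 2 ψ 0) (hmax : IsLocalMax ψ 0) :
    deriv (deriv ψ) 0 ≤ 0 := by
  by_contra hcon
  push_neg at hcon
  have hψ1 : ContDiffAt ℝ 1 (fderiv ℝ ψ) 0 := hψ.fderiv_right (by norm_num)
  have hderivψ : (deriv ψ) = fun t => fderiv ℝ ψ t 1 := by
    funext t; exact fderiv_apply_one_eq_deriv.symm
  have hdiffd : DifferentiableAt ℝ (deriv ψ) 0 := by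
    rw [hderivψ]
    exact (hψ1.differentiableAt (by norm_num)).clm_apply (differentiableAt_const _)
  have hder : HasDerivAt (deriv ψ) (deriv (deriv ψ) 0) 0 := hdiffd.hasDerivAt
  have h0 : deriv ψ 0 = 0 := hmax.deriv_eq_zero
  have hslope : Tendsto (slope (deriv ψ) 0) (nhdsWithin 0 {(0:ℝ)}ᶜ)
      (nhds (deriv (deriv ψ) 0)) := hasDerivAt_iff_tendsto_slope.mp hder
  have hev : ∀ᶠ t in nhdsWithin 0 {(0:ℝ)}ᶜ, 0 < slope (deriv ψ) 0 t :=
    hslope.eventually (eventually_gt_nhds hcon)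
  rw [eventually_nhdsWithin_iff] at hev
  have hevd : ∀ᶠ t in nhds (0:ℝ), DifferentiableAt ℝ ψ t := by
    filter_upwards [hψ.eventually (by norm_num)] with t ht
    exact ht.differentiableAt (by norm_num)
  have hall : ∀ᶠ t in nhds (0:ℝ),
      (t ∈ ({(0:ℝ)}ᶜ : Set ℝ) → 0 < slope (deriv ψ) 0 t) ∧ DifferentiableAt ℝ ψ t ∧ ψ t ≤ ψ 0 := by
    filter_upwards [hev, hevd, hmax] with t h1 h2 h3 using ⟨h1, h2, h3⟩
  rw [Metric.eventually_nhds_iff] at hall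
  obtain ⟨r, hr, hball⟩ := hall
  set r' := r / 2 with hr'
  have hr'pos : 0 < r' := by positivity
  have hmem : ∀ t ∈ Set.Icc (0:ℝ) r', (t ∈ ({(0:ℝ)}ᶜ : Set ℝ) → 0 < slope (deriv ψ) 0 t) ∧
      DifferentiableAt ℝ ψ t ∧ ψ t ≤ ψ 0 := by
    intro t ht
    apply hball
    rw [Real.dist_eq]
    rw [abs_sub_comm, abs_of_nonpos (by linarith [ht.1])]
    have := ht.2
    simp only [hr'] at this ⊢
    linarith
  have hmono : StrictMonoOn ψ (Set.Icc (0:ℝ) r') := by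
    apply strictMonoOn_of_deriv_pos (convex_Icc _ _)
    · intro t ht
      exact ((hmem t ht).2.1).continuousAt.continuousWithinAt
    · intro x hx
      rw [interior_Icc] at hx
      have hx0 : x ≠ 0 := ne_of_gt hx.1
      have hs := (hmem x ⟨le_of_lt hx.1, le_of_lt hx.2⟩).1 hx0
      rw [slope_def_field, h0] at hs
      simp only [sub_zero] at hs
      rcases div_pos_iff.mp hs with ⟨h, _⟩ | ⟨_, h⟩
      · exact h
      · linarith [hx.1]
  have h1 : ψ 0 < ψ r' := hmono ⟨le_refl _, le_of_lt hr'pos⟩ ⟨le_of_lt hr'pos, le_refl _⟩ hr'pos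
  have h2 : ψ r' ≤ ψ 0 := (hmem r' ⟨le_of_lt hr'pos, le_refl _⟩).2.2
  linarith

private lemma diffat_fderiv_apply {E : Type*} [NormedAddCommGroup E] [NormedSpace ℝ E]
    {h : E → ℝ} {y : E} (hh : ContDiffAt ℝ 2 h y) (v : E) :
    DifferentiableAt ℝ (fun z => fderiv ℝ h z v) y :=
  ((hh.fderiv_right (m := 1) (by norm_num)).differentiableAt (by norm_num)).clm_apply (differentiableAt_const v)

open Filter Metric in
private lemma dd2_nonpos {E : Type*} [NormedAddCommGroup E] [NormedSpace ℝ E]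
    {h : E → ℝ} {y₀ : E} (hh : ContDiffAt ℝ 2 h y₀)
    (hmax : IsLocalMax h y₀) (v : E) :
    fderiv ℝ (fun z => fderiv ℝ h z v) y₀ v ≤ 0 := by
  set L : ℝ → E := fun t => y₀ + t • v with hLdef
  have hL0 : L 0 = y₀ := by simp [hLdef]
  have hLder : ∀ t : ℝ, HasDerivAt L v t := by
    intro t
    have h1 : HasDerivAt (fun s : ℝ => s • v) ((1:ℝ) • v) t := (hasDerivAt_id t).smul_const v
    simpa [hLdef, one_smul] using h1.const_add y₀
  have hLC : ContDiff ℝ 2 L := contDiff_const.add (contDiff_id.smul contDiff_const)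
  have hLt : Tendsto L (nhds 0) (nhds y₀) := by
    rw [← hL0]; exact hLC.continuous.continuousAt
  set ψ : ℝ → ℝ := fun t => h (L t) with hψdef
  have hψC : ContDiffAt ℝ 2 ψ 0 := (hL0.symm ▸ hh).comp 0 hLC.contDiffAt
  have hψmax : IsLocalMax ψ 0 := by
    have := hLt.eventually hmax
    simpa [hψdef, hL0, IsLocalMax, IsMaxFilter] using this
  have hkey := key1d hψC hψmax
  have hev1 : (deriv ψ) =ᶠ[nhds (0:ℝ)] fun t => fderiv ℝ h (L t) v := by
    have hhev : ∀ᶠ x in nhds y₀, ContDiffAt ℝ 2 h x := hh.eventually (by norm_num)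
    filter_upwards [hLt.eventually hhev] with t ht
    exact ((ht.differentiableAt (by norm_num)).hasFDerivAt.comp_hasDerivAt t (hLder t)).deriv
  have h2 : deriv (deriv ψ) 0 = deriv (fun t => fderiv ℝ h (L t) v) 0 := hev1.deriv_eq
  have h3 : HasDerivAt (fun t => fderiv ℝ h (L t) v)
      (fderiv ℝ (fun z => fderiv ℝ h z v) y₀ v) 0 := by
    have hG : HasFDerivAt (fun z => fderiv ℝ h z v)
        (fderiv ℝ (fun z => fderiv ℝ h z v) y₀) (L 0) :=
      hL0.symm ▸ (diffat_fderiv_apply hh v).hasFDerivAt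
    exact hG.comp_hasDerivAt 0 (hLder 0)
  calc fderiv ℝ (fun z => fderiv ℝ h z v) y₀ v = deriv (deriv ψ) 0 := by rw [h2, h3.deriv]
    _ ≤ 0 := hkey

/-- The divergence-form operator w ↦ Σ_i ∂_i(δ ∂_i w). -/
def Lop {d : ℕ} (δ w : Rsp d → ℝ) (y : Rsp d) : ℝ :=
  ∑ i : Fin d, fderiv ℝ (fun z => δ z * fderiv ℝ w z (EuclideanSpace.single i (1:ℝ))) y
    (EuclideanSpace.single i (1:ℝ))

open Filter Metric in
private lemma max_prin {d : ℕ} {ρ : ℝ} (hρ : 0 < ρ) (δ w : Rsp d → ℝ)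
    (hδC : ContDiff ℝ 2 δ)
    (hδpos : ∀ y ∈ Metric.closedBall (0:Rsp d) ρ, 0 < δ y)
    (hδle : ∀ y ∈ Metric.closedBall (0:Rsp d) ρ, δ y ≤ 1)
    (hΔ : ∀ y ∈ Metric.ball (0:Rsp d) ρ,
      0 < ∑ i : Fin d, dd2v δ (EuclideanSpace.single i (1:ℝ)) y)
    (hw2 : ContDiffOn ℝ 2 w (Metric.ball 0 ρ))
    (hwc : ContinuousOn w (Metric.closedBall 0 ρ))
    (hLw : ∀ y ∈ Metric.ball (0:Rsp d) ρ, 0 ≤ Lop δ w y)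
    (hwb : ∀ y ∈ Metric.sphere (0:Rsp d) ρ, w y ≤ 0) :
    ∀ y ∈ Metric.ball (0:Rsp d) ρ, w y ≤ 0 := by
  intro ystar hystar
  have hδdiff : Differentiable ℝ δ := hδC.differentiable (by norm_num)
  have hsub : Metric.ball (0:Rsp d) ρ ⊆ Metric.closedBall 0 ρ := Metric.ball_subset_closedBall
  have main : ∀ σ : ℝ, 0 < σ → w ystar ≤ σ * (-Real.log (δ ystar)) := by
    intro σ hσ
    set wσ : Rsp d → ℝ := fun y => w y + σ * Real.log (δ y) with hwσdef
    have hcont : ContinuousOn wσ (Metric.closedBall 0 ρ) :=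
      hwc.add (continuousOn_const.mul
        ((hδC.continuous.continuousOn).log (fun x hx => (hδpos x hx).ne')))
    obtain ⟨y₀, hy₀mem, hy₀max⟩ := (isCompact_closedBall _ _).exists_isMaxOn
      (Metric.nonempty_closedBall.mpr hρ.le) hcont
    by_cases hbd : y₀ ∈ Metric.ball (0:Rsp d) ρ
    · exfalso
      have hδ0 : δ y₀ ≠ 0 := (hδpos _ hy₀mem).ne'
      have hw2at : ContDiffAt ℝ 2 w y₀ := hw2.contDiffAt (Metric.isOpen_ball.mem_nhds hbd)
      have hwσ2 : ContDiffAt ℝ 2 wσ y₀ :=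
        hw2at.add (contDiffAt_const.mul ((hδC.contDiffAt).log hδ0))
      have hloc : IsLocalMax wσ y₀ :=
        hy₀max.isLocalMax (Filter.mem_of_superset (Metric.isOpen_ball.mem_nhds hbd) hsub)
      have hgrad : fderiv ℝ wσ y₀ = 0 := hloc.fderiv_eq_zero
      set A : ℝ := ∑ i : Fin d, fderiv ℝ
        (fun z => δ z * fderiv ℝ wσ z (EuclideanSpace.single i (1:ℝ))) y₀
        (EuclideanSpace.single i (1:ℝ)) with hAdef
      have hA_nonpos : A ≤ 0 := by
        apply Finset.sum_nonpos
        intro i _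
        have hdF : DifferentiableAt ℝ
            (fun z => fderiv ℝ wσ z (EuclideanSpace.single i (1:ℝ))) y₀ :=
          diffat_fderiv_apply hwσ2 _
        rw [fderiv_fun_mul (hδdiff y₀) hdF]
        have hF0 : fderiv ℝ wσ y₀ (EuclideanSpace.single i (1:ℝ)) = 0 := by
          rw [hgrad]; rfl
        have h2d := dd2_nonpos hwσ2 hloc (EuclideanSpace.single i (1:ℝ))
        have hδp := hδpos _ hy₀mem
        simp only [ContinuousLinearMap.add_apply, ContinuousLinearMap.smul_apply,
          smul_eq_mul, hF0, zero_mul, add_zero]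
        exact mul_nonpos_of_nonneg_of_nonpos hδp.le h2d
      have hA_eq : A = Lop δ w y₀ + σ * ∑ i : Fin d,
          dd2v δ (EuclideanSpace.single i (1:ℝ)) y₀ := by
        rw [hAdef, Lop, Finset.mul_sum, ← Finset.sum_add_distrib]
        apply Finset.sum_congr rfl
        intro i _
        have hEq : (fun z => δ z * fderiv ℝ wσ z (EuclideanSpace.single i (1:ℝ)))
            =ᶠ[nhds y₀]
            (fun z => δ z * fderiv ℝ w z (EuclideanSpace.single i (1:ℝ))
              + σ * fderiv ℝ δ z (EuclideanSpace.single i (1:ℝ))) := by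
          filter_upwards [Metric.isOpen_ball.mem_nhds hbd] with z hz
          have hδz : δ z ≠ 0 := (hδpos _ (hsub hz)).ne'
          have hwdz : DifferentiableAt ℝ w z :=
            (hw2.contDiffAt (Metric.isOpen_ball.mem_nhds hz)).differentiableAt (by norm_num)
          have hlog : HasFDerivAt (fun y => σ * Real.log (δ y))
              (σ • ((δ z)⁻¹ • fderiv ℝ δ z)) z :=
            ((hδdiff z).hasFDerivAt.log hδz).const_mul σ
          have hfd : fderiv ℝ wσ z = fderiv ℝ w z + σ • ((δ z)⁻¹ • fderiv ℝ δ z) :=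
            (hwdz.hasFDerivAt.add hlog).fderiv
          rw [hfd]
          simp only [ContinuousLinearMap.add_apply, ContinuousLinearMap.smul_apply,
            smul_eq_mul]
          field_simp
        rw [hEq.fderiv_eq]
        have hd1 : DifferentiableAt ℝ
            (fun z => δ z * fderiv ℝ w z (EuclideanSpace.single i (1:ℝ))) y₀ :=
          (hδdiff y₀).mul (diffat_fderiv_apply hw2at _)
        have hd2 : DifferentiableAt ℝ
            (fun z => fderiv ℝ δ z (EuclideanSpace.single i (1:ℝ))) y₀ :=
          diffat_fderiv_apply hδC.contDiffAt _
        rw [fderiv_fun_add hd1 (hd2.const_mul σ)]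
        simp only [ContinuousLinearMap.add_apply]
        congr 1
        rw [fderiv_const_mul hd2 σ]
        simp [dd2v]
      have h1 := hLw y₀ hbd
      have h2 := hΔ y₀ hbd
      nlinarith [mul_pos hσ h2]
    · have hsph : y₀ ∈ Metric.sphere (0:Rsp d) ρ := by
        simp only [Metric.mem_closedBall] at hy₀mem
        simp only [Metric.mem_ball] at hbd
        simp only [Metric.mem_sphere]
        linarith [not_lt.mp hbd]
      have h1 : wσ ystar ≤ wσ y₀ := hy₀max (hsub hystar)
      have h2 : Real.log (δ y₀) ≤ 0 :=
        Real.log_nonpos (hδpos _ hy₀mem).le (hδle _ hy₀mem)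
      have h3 := hwb y₀ hsph
      have h4 : σ * Real.log (δ y₀) ≤ 0 := mul_nonpos_of_nonneg_of_nonpos hσ.le h2
      simp only [hwσdef] at h1
      nlinarith
  have hlog0 : 0 ≤ -Real.log (δ ystar) :=
    neg_nonneg.mpr (Real.log_nonpos (hδpos _ (hsub hystar)).le (hδle _ (hsub hystar)))
  by_contra hpos
  push_neg at hpos
  set B := -Real.log (δ ystar) with hB
  have hkey := main (w ystar / (2 * (B + 1))) (by positivity)
  have hB1 : 0 < B + 1 := by linarith
  rw [div_mul_eq_mul_div, mul_comm, le_div_iff₀ (by positivity)] at hkey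
  nlinarith [mul_nonneg hlog0 hpos.le]

open Filter Metric in
private lemma Lop_barrier {d : ℕ} {ρ : ℝ} (δ u₂ : Rsp d → ℝ) (a b t c : ℝ)
    (hδC : ContDiff ℝ 2 δ)
    (hδpos : ∀ y ∈ Metric.ball (0:Rsp d) ρ, 0 < δ y)
    (hu2 : ContDiffOn ℝ 2 u₂ (Metric.ball 0 ρ))
    (heq : ∀ y ∈ Metric.ball (0:Rsp d) ρ,
      (∑ i : Fin d, fderiv ℝ (fun w => δ w * fderiv ℝ u₂ w (EuclideanSpace.single i (1:ℝ))) y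
        (EuclideanSpace.single i (1:ℝ))) = c)
    {y : Rsp d} (hy : y ∈ Metric.ball (0:Rsp d) ρ) :
    Lop δ (fun z => a * Real.log (δ z) + b + t * u₂ z) y
      = a * (∑ i : Fin d, dd2v δ (EuclideanSpace.single i (1:ℝ)) y) + t * c := by
  have hδdiff : Differentiable ℝ δ := hδC.differentiable (by norm_num)
  have hu2at : ContDiffAt ℝ 2 u₂ y := hu2.contDiffAt (Metric.isOpen_ball.mem_nhds hy)
  rw [Lop, ← heq y hy, Finset.mul_sum, Finset.mul_sum, ← Finset.sum_add_distrib]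
  apply Finset.sum_congr rfl
  intro i _
  set v := EuclideanSpace.single i (1:ℝ) with hv
  have hEq : (fun z => δ z * fderiv ℝ (fun z => a * Real.log (δ z) + b + t * u₂ z) z v)
      =ᶠ[nhds y]
      (fun z => a * fderiv ℝ δ z v + t * (δ z * fderiv ℝ u₂ z v)) := by
    filter_upwards [Metric.isOpen_ball.mem_nhds hy] with z hz
    have hδz : δ z ≠ 0 := (hδpos _ hz).ne'
    have hudz : DifferentiableAt ℝ u₂ z :=
      (hu2.contDiffAt (Metric.isOpen_ball.mem_nhds hz)).differentiableAt (by norm_num)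
    have hfd : HasFDerivAt (fun z => a * Real.log (δ z) + b + t * u₂ z)
        ((a • ((δ z)⁻¹ • fderiv ℝ δ z)) + t • fderiv ℝ u₂ z) z :=
      ((((hδdiff z).hasFDerivAt.log hδz).const_mul a).add_const b).add
        (hudz.hasFDerivAt.const_mul t)
    rw [hfd.fderiv]
    simp only [ContinuousLinearMap.add_apply, ContinuousLinearMap.smul_apply, smul_eq_mul]
    field_simp
  rw [hEq.fderiv_eq]
  have hd1 : DifferentiableAt ℝ (fun z => fderiv ℝ δ z v) y :=
    diffat_fderiv_apply hδC.contDiffAt _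
  have hd2 : DifferentiableAt ℝ (fun z => δ z * fderiv ℝ u₂ z v) y :=
    (hδdiff y).mul (diffat_fderiv_apply hu2at _)
  rw [fderiv_fun_add (hd1.const_mul a) (hd2.const_mul t)]
  simp only [ContinuousLinearMap.add_apply]
  rw [fderiv_const_mul hd1 a, fderiv_const_mul hd2 t]
  simp [dd2v]

set_option maxHeartbeats 1600000 in
/-- The logarithmic barrier bounds (4.31) for the solution u₂ of
Σ_i ∂_i(δ(y')∂_i u₂) = c in B'_ρ with u₂ = 0 on ∂B'_ρ, under 1/M ≤ Δδ ≤ M: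
M·c·ln δ(y') − C·c·|ln ρ| ≤ u₂(y') ≤ (1/M)·c·ln δ(y') + C·c·|ln ρ|, where C depends
only on n = d+1, κ and M. -/
theorem stmt_17 (d : ℕ) (hd : 2 ≤ d) (κ : ℝ) (hκ : κ ∈ Set.Ioo (0 : ℝ) 1)
    (M : ℝ) (hM : 1 ≤ M) :
    ∃ C : ℝ, 0 < C ∧
      ∀ ε R ρ : ℝ, ε ∈ Set.Ioo (0 : ℝ) 1 → R ∈ Set.Ioo (0 : ℝ) 1 →
        0 < ρ → ρ ≤ 2 * R → ε ≤ ρ ^ 2 → (1 + κ⁻¹) * ρ ^ 2 ≤ 1 / 2 →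
      ∀ f g : Rsp d → ℝ,
        ContDiff ℝ 2 f → ContDiff ℝ 2 g →
        f 0 = 0 → g 0 = 0 → fderiv ℝ f 0 = 0 → fderiv ℝ g 0 = 0 →
        (∀ y' : Rsp d, ‖y'‖ ≤ 2 * R → g y' ≤ f y') →
        (∀ y' : Rsp d, ‖y'‖ ≤ 2 * R →
          κ * ‖y'‖ ^ 2 ≤ f y' - g y' ∧ f y' - g y' ≤ κ⁻¹ * ‖y'‖ ^ 2) →
        (∀ y' ∈ Metric.ball (0 : Rsp d) ρ,
          1 / M ≤ ∑ i : Fin d,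
              dd2v (dlt ε f g) (EuclideanSpace.single i (1 : ℝ)) y' ∧
          (∑ i : Fin d,
              dd2v (dlt ε f g) (EuclideanSpace.single i (1 : ℝ)) y') ≤ M) →
      ∀ c : ℝ, 0 ≤ c →
      ∀ u₂ : Rsp d → ℝ,
        ContDiffOn ℝ 2 u₂ (Metric.ball (0 : Rsp d) ρ) →
        ContinuousOn u₂ (closure (Metric.ball (0 : Rsp d) ρ)) →
        (∀ y' ∈ Metric.ball (0 : Rsp d) ρ,
          (∑ i : Fin d, fderiv ℝ (fun w => dlt ε f g w *
              fderiv ℝ u₂ w (EuclideanSpace.single i (1 : ℝ))) y'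
            (EuclideanSpace.single i (1 : ℝ))) = c) →
        (∀ y' ∈ Metric.sphere (0 : Rsp d) ρ, u₂ y' = 0) →
      ∀ y' ∈ Metric.ball (0 : Rsp d) ρ,
        M * c * Real.log (dlt ε f g y') - C * c * |Real.log ρ| ≤ u₂ y' ∧
        u₂ y' ≤ (1 / M) * c * Real.log (dlt ε f g y') + C * c * |Real.log ρ| := by
  obtain ⟨hκ0, hκ1⟩ := hκ
  have hM0 : (0:ℝ) < M := lt_of_lt_of_le one_pos hM
  have hlog2 : 0 < Real.log 2 := Real.log_pos one_lt_two
  have hlogκ : 0 < Real.log κ⁻¹ := by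
    rw [Real.log_inv]; linarith [Real.log_neg hκ0 hκ1]
  set D : ℝ := Real.log κ⁻¹ / Real.log 2 with hDdef
  have hD : 0 < D := by positivity
  clear_value D
  refine ⟨M * (D + 2) + 1, by nlinarith, ?_⟩
  intro ε R ρ hε hR hρ hρ2R hερ hsmall f g hf hg hf0 hg0 hdf0 hdg0 hge hpinch hΔ
    c hc u₂ hu2 hu2c heq hbdry y' hy'
  set C : ℝ := M * (D + 2) + 1 with hCdef
  have hCD : D + 2 ≤ C := by rw [hCdef]; nlinarith
  have hC0 : 0 < C := by rw [hCdef]; nlinarith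
  clear_value C
  have hκinv : 1 < κ⁻¹ := by
    have h1 : κ * κ⁻¹ = 1 := mul_inv_cancel₀ hκ0.ne'
    nlinarith [inv_pos.mpr hκ0]
  have hρ2 : ρ ^ 2 ≤ 1/4 := by
    have h2 : 2 * ρ ^ 2 ≤ (1 + κ⁻¹) * ρ ^ 2 := by nlinarith [sq_nonneg ρ]
    linarith
  have hρhalf : ρ ≤ 1/2 := by nlinarith [sq_nonneg (ρ - 1/2)]
  have hρ1 : ρ < 1 := by linarith
  have hlogρneg : Real.log ρ < 0 := Real.log_neg hρ hρ1
  have habs : |Real.log ρ| = -Real.log ρ := abs_of_neg hlogρneg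
  have hlog2le : Real.log 2 ≤ -Real.log ρ := by
    have h1 : Real.log ρ ≤ Real.log (1/2) := Real.log_le_log hρ hρhalf
    have h2 : Real.log (1/2) = -Real.log 2 := by rw [one_div, Real.log_inv]
    linarith
  have hδC : ContDiff ℝ 2 (dlt ε f g) := by
    have : ContDiff ℝ 2 (fun y : Rsp d => ε + f y - g y) := (contDiff_const.add hf).sub hg
    exact this
  have hδpos : ∀ y ∈ Metric.closedBall (0:Rsp d) ρ, 0 < dlt ε f g y := by
    intro y hy
    rw [Metric.mem_closedBall, dist_zero_right] at hy
    have hn : ‖y‖ ≤ 2 * R := le_trans hy hρ2R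
    have h1 := (hpinch y hn).1
    have h2 : 0 ≤ κ * ‖y‖ ^ 2 := mul_nonneg hκ0.le (sq_nonneg _)
    show 0 < ε + f y - g y
    linarith [hε.1]
  have hδle1 : ∀ y ∈ Metric.closedBall (0:Rsp d) ρ, dlt ε f g y ≤ 1 := by
    intro y hy
    rw [Metric.mem_closedBall, dist_zero_right] at hy
    have hn : ‖y‖ ≤ 2 * R := le_trans hy hρ2R
    have h1 := (hpinch y hn).2
    have h2 : ‖y‖ ^ 2 ≤ ρ ^ 2 := by nlinarith [norm_nonneg y]
    have h3 : κ⁻¹ * ‖y‖ ^ 2 ≤ κ⁻¹ * ρ ^ 2 :=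
      mul_le_mul_of_nonneg_left h2 (by positivity)
    show ε + f y - g y ≤ 1
    nlinarith
  have hδpos' : ∀ y ∈ Metric.ball (0:Rsp d) ρ, 0 < dlt ε f g y :=
    fun y hy => hδpos y (Metric.ball_subset_closedBall hy)
  have hΔpos : ∀ y ∈ Metric.ball (0:Rsp d) ρ,
      0 < ∑ i : Fin d, dd2v (dlt ε f g) (EuclideanSpace.single i (1:ℝ)) y := by
    intro y hy
    exact lt_of_lt_of_le (by positivity) (hΔ y hy).1
  have hcb : closure (Metric.ball (0:Rsp d) ρ) = Metric.closedBall 0 ρ :=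
    closure_ball _ hρ.ne'
  rw [hcb] at hu2c
  have hlogC : ContDiffOn ℝ 2 (fun z => Real.log (dlt ε f g z)) (Metric.ball (0:Rsp d) ρ) :=
    fun x hx => ((hδC.contDiffAt.log (hδpos' x hx).ne')).contDiffWithinAt
  have hlogcont : ContinuousOn (fun z => Real.log (dlt ε f g z))
      (Metric.closedBall (0:Rsp d) ρ) :=
    (hδC.continuous.continuousOn).log (fun x hx => (hδpos x hx).ne')
  -- lower barrier
  have hlo : ∀ y ∈ Metric.ball (0:Rsp d) ρ,
      (fun z => (M*c) * Real.log (dlt ε f g z) + (-(C*c*|Real.log ρ|)) + (-1) * u₂ z) y ≤ 0 := by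
    apply max_prin hρ (dlt ε f g) _ hδC hδpos hδle1 hΔpos
    · exact ((contDiffOn_const.mul hlogC).add contDiffOn_const).add (contDiffOn_const.mul hu2)
    · exact ((continuousOn_const.mul hlogcont).add continuousOn_const).add
        (continuousOn_const.mul hu2c)
    · intro y hy
      rw [Lop_barrier (dlt ε f g) u₂ (M*c) (-(C*c*|Real.log ρ|)) (-1) c hδC hδpos' hu2 heq hy]
      have h1 := (hΔ y hy).1
      have h2 : (M*c) * (1/M) ≤ (M*c) * ∑ i : Fin d,
          dd2v (dlt ε f g) (EuclideanSpace.single i (1:ℝ)) y :=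
        mul_le_mul_of_nonneg_left h1 (by positivity)
      have h3 : (M*c) * (1/M) = c := by field_simp
      linarith
    · intro y hy
      have hylcb : y ∈ Metric.closedBall (0:Rsp d) ρ := Metric.sphere_subset_closedBall hy
      have hu0 : u₂ y = 0 := hbdry y hy
      have hlogy : Real.log (dlt ε f g y) ≤ 0 :=
        Real.log_nonpos (hδpos _ hylcb).le (hδle1 _ hylcb)
      have h1 : (M*c) * Real.log (dlt ε f g y) ≤ 0 :=
        mul_nonpos_of_nonneg_of_nonpos (by positivity) hlogy
      have h2 : 0 ≤ C*c*|Real.log ρ| := by positivity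
      simp only [hu0]
      linarith
  -- upper barrier
  have hup : ∀ y ∈ Metric.ball (0:Rsp d) ρ,
      (fun z => (-(1/M*c)) * Real.log (dlt ε f g z) + (-(C*c*|Real.log ρ|)) + 1 * u₂ z) y ≤ 0 := by
    apply max_prin hρ (dlt ε f g) _ hδC hδpos hδle1 hΔpos
    · exact ((contDiffOn_const.mul hlogC).add contDiffOn_const).add (contDiffOn_const.mul hu2)
    · exact ((continuousOn_const.mul hlogcont).add continuousOn_const).add
        (continuousOn_const.mul hu2c)
    · intro y hy
      rw [Lop_barrier (dlt ε f g) u₂ (-(1/M*c)) (-(C*c*|Real.log ρ|)) 1 c hδC hδpos' hu2 heq hy]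
      have h1 := (hΔ y hy).2
      have h2 : (1/M*c) * (∑ i : Fin d,
          dd2v (dlt ε f g) (EuclideanSpace.single i (1:ℝ)) y) ≤ (1/M*c) * M :=
        mul_le_mul_of_nonneg_left h1 (by positivity)
      have h3 : (1/M*c) * M = c := by field_simp
      linarith [h2, h3]
    · intro y hy
      have hylcb : y ∈ Metric.closedBall (0:Rsp d) ρ := Metric.sphere_subset_closedBall hy
      have hn : ‖y‖ = ρ := by rwa [Metric.mem_sphere, dist_zero_right] at hy
      have hu0 : u₂ y = 0 := hbdry y hy
      have hn2R : ‖y‖ ≤ 2 * R := by rw [hn]; exact hρ2R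
      have hδlow : κ * ρ ^ 2 ≤ dlt ε f g y := by
        have h1 := (hpinch y hn2R).1
        rw [hn] at h1
        show κ * ρ ^ 2 ≤ ε + f y - g y
        linarith [hε.1]
      have hlb : Real.log (κ * ρ ^ 2) ≤ Real.log (dlt ε f g y) :=
        Real.log_le_log (by positivity) hδlow
      have hsplit : Real.log (κ * ρ ^ 2) = Real.log κ + 2 * Real.log ρ := by
        rw [Real.log_mul hκ0.ne' (by positivity), Real.log_pow]
        norm_num
      have hlogκinv : Real.log κ⁻¹ = -Real.log κ := Real.log_inv κ
      set t : ℝ := -Real.log ρ with htdef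
      have ht0 : 0 < t := by rw [htdef]; linarith
      clear_value t
      have hkey : -Real.log (dlt ε f g y) ≤ D * t + 2 * t := by
        have h1 : Real.log κ⁻¹ ≤ D * t := by
          rw [hDdef, div_mul_eq_mul_div, le_div_iff₀ hlog2]
          exact mul_le_mul_of_nonneg_left hlog2le hlogκ.le
        have h2 : -Real.log (dlt ε f g y) ≤ Real.log κ⁻¹ + 2 * t := by
          rw [htdef]; linarith
        linarith
      have hMc : (0:ℝ) ≤ 1/M*c := by positivity
      have s1 : (1/M*c) * (-Real.log (dlt ε f g y)) ≤ (1/M*c) * (D * t + 2 * t) :=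
        mul_le_mul_of_nonneg_left hkey hMc
      have s2 : 1/M*c ≤ c := by
        have h01 : 1/M ≤ 1 := by rw [div_le_one hM0]; exact hM
        calc 1/M*c ≤ 1*c := mul_le_mul_of_nonneg_right h01 hc
          _ = c := one_mul c
      have s3 : (1/M*c) * (D * t + 2 * t) ≤ c * (D * t + 2 * t) := by
        have hDt : 0 ≤ D * t + 2 * t := by positivity
        exact mul_le_mul_of_nonneg_right s2 hDt
      have s4 : c * (D * t + 2 * t) ≤ C * c * t := by
        have := mul_le_mul_of_nonneg_right hCD (mul_nonneg hc ht0.le)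
        nlinarith
      have hfinal : (1/M*c) * (-Real.log (dlt ε f g y)) ≤ C * c * t := by linarith
      simp only [hu0, habs]
      linarith [hfinal]
  have hl := hlo y' hy'
  have hu := hup y' hy'
  simp only [habs] at hl hu ⊢
  constructor
  · linarith [hl]
  · linarith [hu]
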